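/- Let G be a finitely generated group with an orientation preserving action on the circle by homeomorphisms and let μ be a G-invariant Borel probability measure. If every group homomorphism G → (ℝ,+) is trivial (i.e., H^1(G,ℝ) = 0), then the commutator subgroup [G,G] acts with a global fixed point: there exists a point of the circle fixed by every element of [G,G]. -/

import Mathlib

noncomputable section

open MeasureTheory

/-- The circle `S¹ = ℝ/ℤ`. -/
abbrev 𝕊 : Type := AddCircle (1 : ℝ)

/-- `F : ℝ → ℝ` is a lift of the circle bijection `f` witnessing that `f` is an
orientation preserving homeomorphism of the circle: `F` is a strictly increasing
homeomorphism of `ℝ` (equivalently, continuous and strictly increasing) satisfying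
`F (x + 1) = F x + 1`, and projecting to `f`. -/
def IsOPLift (f : Equiv.Perm 𝕊) (F : ℝ → ℝ) : Prop :=
  Continuous F ∧ StrictMono F ∧ (∀ x : ℝ, F (x + 1) = F x + 1) ∧
    ∀ x : ℝ, f (x : 𝕊) = (F x : 𝕊)

/-- `f` is an orientation preserving homeomorphism of the circle. -/
def IsOPHomeo (f : Equiv.Perm 𝕊) : Prop := ∃ F : ℝ → ℝ, IsOPLift f F

/-- `F` is a lift witnessing that `f` is an orientation preserving `C¹` diffeomorphism
of the circle: an orientation preserving lift which is `C¹` with nowhere vanishing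
derivative. -/
def IsC1Lift (f : Equiv.Perm 𝕊) (F : ℝ → ℝ) : Prop :=
  IsOPLift f F ∧ ContDiff ℝ 1 F ∧ ∀ x : ℝ, deriv F x ≠ 0

/-- `f` is an orientation preserving `C¹` diffeomorphism of the circle, i.e. an element
of `Diff¹₊(S¹)`. -/
def IsC1Diffeo (f : Equiv.Perm 𝕊) : Prop := ∃ F : ℝ → ℝ, IsC1Lift f F

/-! ### Auxiliary lemmas -/

namespace OPAux

variable {f g : Equiv.Perm 𝕊} {F Fg : ℝ → ℝ}

lemma periodic_sub (h : IsOPLift f F) : Function.Periodic (fun x => F x - x) 1 := by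
  intro x
  simp only
  rw [h.2.2.1]
  ring

/-- The displacement function of a lift, descended to the circle. -/
def disp (h : IsOPLift f F) : 𝕊 → ℝ := (periodic_sub h).lift

lemma disp_coe (h : IsOPLift f F) (x : ℝ) : disp h (x : 𝕊) = F x - x :=
  (periodic_sub h).lift_coe x

lemma disp_continuous (h : IsOPLift f F) : Continuous (disp h) := by
  rw [(QuotientAddGroup.isQuotientMap_mk _).continuous_iff]
  have : disp h ∘ QuotientAddGroup.mk = fun x : ℝ => F x - x := funext fun x => disp_coe h x
  rw [this]
  exact h.1.sub continuous_id

lemma continuous_perm (h : IsOPLift f F) : Continuous ⇑f := by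
  rw [(QuotientAddGroup.isQuotientMap_mk _).continuous_iff]
  have : ⇑f ∘ QuotientAddGroup.mk = fun x : ℝ => ((F x : ℝ) : 𝕊) := funext fun x => h.2.2.2 x
  rw [this]
  exact (QuotientAddGroup.isQuotientMap_mk _).continuous.comp h.1

lemma coe_eq_coe_iff {a b : ℝ} : (a : 𝕊) = (b : 𝕊) ↔ ∃ k : ℤ, a - b = k := by
  rw [QuotientAddGroup.eq_iff_sub_mem]
  constructor
  · rintro hmem
    obtain ⟨k, hk⟩ := AddSubgroup.mem_zmultiples_iff.mp hmem
    exact ⟨k, by simpa using hk.symm⟩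
  · rintro ⟨k, hk⟩
    refine AddSubgroup.mem_zmultiples_iff.mpr ⟨k, by simpa using hk.symm⟩

lemma lift_unique (h : IsOPLift f F) {F' : ℝ → ℝ} (h' : IsOPLift f F') :
    ∃ n : ℤ, ∀ x, F' x = F x + n := by
  have hint : ∀ x : ℝ, ∃ n : ℤ, F' x - F x = n := by
    intro x
    have : ((F' x : ℝ) : 𝕊) = (F x : 𝕊) := (h'.2.2.2 x).symm.trans (h.2.2.2 x)
    exact coe_eq_coe_iff.mp this
  obtain ⟨n₀, hn₀⟩ := hint 0
  refine ⟨n₀, fun x => ?_⟩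
  obtain ⟨n₁, hn₁⟩ := hint x
  have hd : Continuous (fun y => F' y - F y) := h'.1.sub h.1
  by_contra hx
  have hne : n₁ ≠ n₀ := by
    rintro rfl
    exact hx (by linarith [hn₁])
  set c : ℝ := (min n₀ n₁ : ℤ) + 1/2 with hc
  have hcmin : c = min (n₀ : ℝ) (n₁ : ℝ) + 1/2 := by
    rw [hc, Int.cast_min]
  have hmem : c ∈ Set.uIcc ((fun y => F' y - F y) 0) ((fun y => F' y - F y) x) := by
    simp only [hn₀, hn₁]
    rw [Set.mem_uIcc]
    rcases le_total n₀ n₁ with hle | hle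
    · have hlt : n₀ < n₁ := lt_of_le_of_ne hle (Ne.symm hne)
      have hlt' : (n₀ : ℝ) + 1 ≤ (n₁ : ℝ) := by exact_mod_cast hlt
      left
      rw [hcmin, min_eq_left (by exact_mod_cast hle)]
      constructor <;> linarith
    · have hlt : n₁ < n₀ := lt_of_le_of_ne hle hne
      have hlt' : (n₁ : ℝ) + 1 ≤ (n₀ : ℝ) := by exact_mod_cast hlt
      right
      rw [hcmin, min_eq_right (by exact_mod_cast hle)]
      constructor <;> linarith
  obtain ⟨y, _, hy⟩ := intermediate_value_uIcc (a := 0) (b := x) hd.continuousOn hmem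
  obtain ⟨n₂, hn₂⟩ := hint y
  have hy : F' y - F y = c := hy
  rw [hn₂] at hy
  have : (2 * n₂ : ℝ) = 2 * (min n₀ n₁ : ℤ) + 1 := by rw [hc] at hy; push_cast; push_cast at hy; linarith
  have : (2 * n₂ : ℤ) = 2 * min n₀ n₁ + 1 := by exact_mod_cast this
  omega

lemma lift_comp (h : IsOPLift f F) (hg : IsOPLift g Fg) : IsOPLift (f * g) (F ∘ Fg) := by
  refine ⟨h.1.comp hg.1, h.2.1.comp hg.2.1, fun x => ?_, fun x => ?_⟩
  · simp only [Function.comp_apply, hg.2.2.1, h.2.2.1]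
  · simp only [Function.comp_apply, Equiv.Perm.mul_apply, hg.2.2.2, h.2.2.2]

lemma lift_sub_int (h : IsOPLift f F) (m : ℤ) : IsOPLift f (fun x => F x - m) := by
  refine ⟨h.1.sub continuous_const, fun a b hab => by simpa using h.2.1 hab, fun x => by
    show F (x + 1) - (m : ℝ) = (F x - m) + 1
    rw [h.2.2.1]; ring, fun x => ?_⟩
  show f (x : 𝕊) = ((F x - m : ℝ) : 𝕊)
  rw [h.2.2.2 x]
  exact (coe_eq_coe_iff.mpr ⟨-m, by push_cast; ring⟩).symm

/-- Non-recurrence of non-fixed points for a circle homeo whose lift has a fixed point. -/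
lemma not_recurrent (h : IsOPLift f F) {z : ℝ} (hz : F z = z) {x : 𝕊} (hx : f x ≠ x) :
    ∃ s ∈ nhds x, ∀ n, 1 ≤ n → f^[n] x ∉ s := by
  have hz1 : F (z + 1) = z + 1 := by rw [h.2.2.1, hz]
  set r : ℝ := ((AddCircle.equivIco 1 z x : ℝ)) with hrdef
  have hrIco : r ∈ Set.Ico z (z + 1) := (AddCircle.equivIco 1 z x).2
  have hrx : ((r : ℝ) : 𝕊) = x := (AddCircle.equivIco 1 z).symm_apply_apply x
  have hrz : r ≠ z := by
    rintro hrz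
    apply hx
    rw [← hrx, hrz, h.2.2.2, hz]
  have hrIoo : r ∈ Set.Ioo z (z + 1) := ⟨lt_of_le_of_ne hrIco.1 (Ne.symm hrz), hrIco.2⟩
  have hIoo : ∀ y ∈ Set.Ioo z (z + 1), F y ∈ Set.Ioo z (z + 1) := by
    intro y hy
    exact ⟨hz ▸ h.2.1 hy.1, hz1 ▸ h.2.1 hy.2⟩
  have hFr : F r ≠ r := by
    intro hFr
    apply hx
    rw [← hrx, h.2.2.2, hFr]
  have hiter : ∀ n : ℕ, f^[n] x = ((F^[n] r : ℝ) : 𝕊) := by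
    intro n
    induction n with
    | zero => simp [hrx]
    | succ k ih =>
      rw [Function.iterate_succ_apply', Function.iterate_succ_apply', ih, h.2.2.2]
  rcases lt_or_gt_of_ne hFr with hlt | hgt
  · -- F r < r : orbit decreasing
    have P : ∀ n : ℕ, F^[n+1] r ≤ F r ∧ F^[n+2] r ≤ F^[n+1] r ∧ F^[n+1] r ∈ Set.Ioo z (z+1) := by
      intro n
      induction n with
      | zero =>
        refine ⟨by simp, ?_, by simpa using hIoo r hrIoo⟩
        have : F (F r) ≤ F r := h.2.1.monotone hlt.le
        simpa [Function.iterate_succ_apply'] using this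
      | succ k ih =>
        refine ⟨le_trans ih.2.1 ih.1, ?_, ?_⟩
        · have : F (F^[k+2] r) ≤ F (F^[k+1] r) := h.2.1.monotone ih.2.1
          simpa [Function.iterate_succ_apply'] using this
        · rw [Function.iterate_succ_apply']
          exact hIoo _ ih.2.2
    set δ : ℝ := min ((r - F r)/2) ((z + 1 - r)/2) with hδdef
    have hδ : 0 < δ := by
      apply lt_min <;> [linarith [hlt]; linarith [hrIoo.2]]
    have hopen : IsOpen ((fun t : ℝ => (t : 𝕊)) '' Set.Ioo (r - δ) (r + δ)) := by
      first
      | exact QuotientAddGroup.isOpenMap_coe _ isOpen_Ioo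
      | exact QuotientAddGroup.isOpenMap_coe _ _ isOpen_Ioo
    refine ⟨(fun t : ℝ => (t : 𝕊)) '' Set.Ioo (r - δ) (r + δ), ?_, ?_⟩
    · exact IsOpen.mem_nhds hopen ⟨r, ⟨by linarith, by linarith⟩, hrx⟩
    · rintro n hn hmem
      obtain ⟨m, rfl⟩ : ∃ m, n = m + 1 := ⟨n - 1, by omega⟩
      rw [hiter] at hmem
      obtain ⟨t, ht, hteq⟩ := hmem
      obtain ⟨k, hk⟩ := coe_eq_coe_iff.mp hteq
      have hδ1 : δ ≤ (r - F r)/2 := min_le_left _ _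
      have hδ2 : δ ≤ (z + 1 - r)/2 := min_le_right _ _
      have ha1 : F^[m+1] r ≤ F r := (P m).1
      have ha2 : z < F^[m+1] r := (P m).2.2.1
      -- t - F^[m+1] r = k, with 0 < t - F^[m+1] r < 1
      have hk0 : (0 : ℝ) < k := by rw [← hk]; linarith [ht.1]
      have hk1 : (k : ℝ) < 1 := by rw [← hk]; linarith [ht.2]
      have h1' : (0 : ℤ) < k := by exact_mod_cast hk0
      have h2' : k < 1 := by exact_mod_cast hk1
      omega
  · -- F r > r : orbit increasing
    have P : ∀ n : ℕ, F r ≤ F^[n+1] r ∧ F^[n+1] r ≤ F^[n+2] r ∧ F^[n+1] r ∈ Set.Ioo z (z+1) := by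
      intro n
      induction n with
      | zero =>
        refine ⟨by simp, ?_, by simpa using hIoo r hrIoo⟩
        have : F r ≤ F (F r) := h.2.1.monotone hgt.le
        simpa [Function.iterate_succ_apply'] using this
      | succ k ih =>
        refine ⟨le_trans ih.1 ih.2.1, ?_, ?_⟩
        · have : F (F^[k+1] r) ≤ F (F^[k+2] r) := h.2.1.monotone ih.2.1
          simpa [Function.iterate_succ_apply'] using this
        · rw [Function.iterate_succ_apply']
          exact hIoo _ ih.2.2
    set δ : ℝ := min ((F r - r)/2) ((r - z)/2) with hδdef
    have hδ : 0 < δ := by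
      apply lt_min <;> [linarith [hgt]; linarith [hrIoo.1]]
    have hopen : IsOpen ((fun t : ℝ => (t : 𝕊)) '' Set.Ioo (r - δ) (r + δ)) := by
      first
      | exact QuotientAddGroup.isOpenMap_coe _ isOpen_Ioo
      | exact QuotientAddGroup.isOpenMap_coe _ _ isOpen_Ioo
    refine ⟨(fun t : ℝ => (t : 𝕊)) '' Set.Ioo (r - δ) (r + δ), ?_, ?_⟩
    · exact IsOpen.mem_nhds hopen ⟨r, ⟨by linarith, by linarith⟩, hrx⟩
    · rintro n hn hmem
      obtain ⟨m, rfl⟩ : ∃ m, n = m + 1 := ⟨n - 1, by omega⟩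
      rw [hiter] at hmem
      obtain ⟨t, ht, hteq⟩ := hmem
      obtain ⟨k, hk⟩ := coe_eq_coe_iff.mp hteq
      have hδ1 : δ ≤ (F r - r)/2 := min_le_left _ _
      have hδ2 : δ ≤ (r - z)/2 := min_le_right _ _
      have ha1 : F r ≤ F^[m+1] r := (P m).1
      have ha2 : F^[m+1] r < z + 1 := (P m).2.2.2
      have hk0 : (k : ℝ) < 0 := by rw [← hk]; linarith [ht.2]
      have hk1 : (-1 : ℝ) < k := by rw [← hk]; linarith [ht.1]
      have h1' : k < (0 : ℤ) := by exact_mod_cast hk0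
      have h2' : (-1 : ℤ) < k := by exact_mod_cast hk1
      omega

lemma integrable_of_continuous {φ : 𝕊 → ℝ} (hφ : Continuous φ) (μ : Measure 𝕊)
    [IsProbabilityMeasure μ] : Integrable φ μ :=
  hφ.integrable_of_hasCompactSupport (isClosed_tsupport _).isCompact

/-- If `f` preserves `μ` and the mean displacement of its lift is zero, then `f = id` a.e. -/
lemma ae_fixed (h : IsOPLift f F) (μ : Measure 𝕊) [IsProbabilityMeasure μ]
    (hinv : Measure.map f μ = μ) (hzero : ∫ x, disp h x ∂μ = 0) :
    ∀ᵐ x ∂μ, f x = x := by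
  -- a fixed point of the lift exists
  have hcont := disp_continuous h
  have hle : ∃ u : 𝕊, disp h u ≤ 0 := by
    by_contra hpos
    push_neg at hpos
    obtain ⟨u₀, -, hmin⟩ := isCompact_univ.exists_isMinOn (Set.univ_nonempty)
      hcont.continuousOn
    have : ∫ x, (fun _ : 𝕊 => disp h u₀) x ∂μ ≤ ∫ x, disp h x ∂μ :=
      integral_mono (integrable_const _) (integrable_of_continuous hcont μ)
        (fun x => hmin (Set.mem_univ x))
    rw [hzero, integral_const] at this
    simp at this
    linarith [hpos u₀]
  have hge : ∃ v : 𝕊, 0 ≤ disp h v := by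
    by_contra hneg
    push_neg at hneg
    obtain ⟨v₀, -, hmax⟩ := isCompact_univ.exists_isMaxOn (Set.univ_nonempty)
      hcont.continuousOn
    have : ∫ x, disp h x ∂μ ≤ ∫ x, (fun _ : 𝕊 => disp h v₀) x ∂μ :=
      integral_mono (integrable_of_continuous hcont μ) (integrable_const _)
        (fun x => hmax (Set.mem_univ x))
    rw [hzero, integral_const] at this
    simp at this
    linarith [hneg v₀]
  obtain ⟨u, hu⟩ := hle
  obtain ⟨v, hv⟩ := hge
  obtain ⟨u', rfl⟩ := QuotientAddGroup.mk_surjective u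
  obtain ⟨v', rfl⟩ := QuotientAddGroup.mk_surjective v
  rw [show ((QuotientAddGroup.mk u' : 𝕊)) = (u' : 𝕊) from rfl, disp_coe] at hu
  rw [show ((QuotientAddGroup.mk v' : 𝕊)) = (v' : 𝕊) from rfl, disp_coe] at hv
  have hivt : ∃ z ∈ Set.uIcc u' v', (fun y => F y - y) z = 0 := by
    have := intermediate_value_uIcc (a := u') (b := v')
      ((h.1.sub continuous_id).continuousOn)
    have h0 : (0:ℝ) ∈ Set.uIcc (F u' - u') (F v' - v') := Set.mem_uIcc.mpr (Or.inl ⟨hu, hv⟩)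
    obtain ⟨z, hz1, hz2⟩ := this h0
    exact ⟨z, hz1, hz2⟩
  obtain ⟨z, -, hz⟩ := hivt
  have hzfix : F z = z := by simpa [sub_eq_zero] using hz
  -- recurrence
  have hmeas : Measurable ⇑f := (continuous_perm h).measurable
  have hmp : MeasurePreserving ⇑f μ μ := ⟨hmeas, hinv⟩
  have hcons := hmp.conservative
  filter_upwards [hcons.ae_frequently_mem_of_mem_nhds] with x hrec
  by_contra hx
  obtain ⟨s, hs, hns⟩ := not_recurrent h hzfix hx
  have hfreq := hrec s hs
  obtain ⟨n, hn1, hn2⟩ := Filter.frequently_atTop.mp hfreq 1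
  exact hns n hn1 hn2

end OPAux

/-- A finitely generated group is countable. -/
lemma countable_of_fg (G : Type*) [Group G] [Group.FG G] : Countable G := by
  obtain ⟨S, hS⟩ := (Group.fg_iff_monoid_fg.mp ‹_›).fg_top
  have hsur : Function.Surjective
      (fun l : List {y // y ∈ (S : Set G)} => (l.map Subtype.val).prod) := by
    intro x
    have hx : x ∈ Submonoid.closure (S : Set G) := hS ▸ Submonoid.mem_top x
    obtain ⟨l, hl, hp⟩ := Submonoid.exists_list_of_mem_closure hx
    refine ⟨l.attach.map (fun y => ⟨y.1, hl y.1 y.2⟩), ?_⟩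
    simp only [List.map_map]
    have : (Subtype.val ∘ fun y : {y // y ∈ l} => (⟨y.1, hl y.1 y.2⟩ : {y // y ∈ (S : Set G)}))
        = Subtype.val := rfl
    rw [this, List.attach_map_subtype_val]
    exact hp
  haveI : Finite {y // y ∈ (S : Set G)} := S.finite_toSet.to_subtype
  exact hsur.countable

open OPAux in
/-- Let `G` be a finitely generated group with an orientation preserving
action on the circle by homeomorphisms preserving a Borel probability measure `μ`.  If
every group homomorphism `G → (ℝ, +)` is trivial (i.e. `H¹(G, ℝ) = 0`), then the
commutator subgroup `[G, G]` acts with a global fixed point. -/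
theorem commutator_global_fixed_point
    (G : Type*) [Group G] [Group.FG G]
    (ρ : G →* Equiv.Perm 𝕊) (hop : ∀ g : G, IsOPHomeo (ρ g))
    (μ : Measure 𝕊) [IsProbabilityMeasure μ]
    (hinv : ∀ g : G, Measure.map (ρ g) μ = μ)
    (h1 : ∀ φ : G →* Multiplicative ℝ, φ = 1) :
    ∃ x : 𝕊, ∀ g ∈ commutator G, ρ g x = x := by
  classical
  have hcount : Countable G := countable_of_fg G
  choose L hL using hop
  set τ : G → ℝ := fun g => ∫ x, disp (hL g) x ∂μ with hτdef
  have hint : ∀ g : G, Integrable (disp (hL g)) μ := fun g =>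
    integrable_of_continuous (disp_continuous (hL g)) μ
  -- quasimorphism property
  have key : ∀ a b : G, ∃ n : ℤ, τ (a * b) = τ a + τ b + n := by
    intro a b
    have hcomp : IsOPLift (ρ (a * b)) (L a ∘ L b) := by
      rw [map_mul]
      exact lift_comp (hL a) (hL b)
    obtain ⟨n, hn⟩ := lift_unique hcomp (hL (a * b))
    refine ⟨n, ?_⟩
    have hdisp : ∀ x : 𝕊, disp (hL (a * b)) x
        = disp (hL a) (ρ b x) + disp (hL b) x + n := by
      intro x
      obtain ⟨r, rfl⟩ := QuotientAddGroup.mk_surjective x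
      have h1' : ρ b ((r : ℝ) : 𝕊) = ((L b r : ℝ) : 𝕊) := (hL b).2.2.2 r
      rw [show ((QuotientAddGroup.mk r : 𝕊)) = (r : 𝕊) from rfl, disp_coe, h1', disp_coe, disp_coe,
        hn r]
      simp only [Function.comp_apply]
      ring
    have hmeasb : AEMeasurable (⇑(ρ b)) μ := (continuous_perm (hL b)).measurable.aemeasurable
    have hcomp_int : ∫ x, disp (hL a) (ρ b x) ∂μ = τ a := by
      rw [hτdef]
      simp only
      rw [← integral_map hmeasb ((disp_continuous (hL a)).aestronglyMeasurable), hinv b]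
    calc τ (a * b) = ∫ x, (disp (hL a) (ρ b x) + disp (hL b) x + (n : ℝ)) ∂μ := by
          rw [hτdef]; exact integral_congr_ae (Filter.Eventually.of_forall hdisp)
      _ = ∫ x, (disp (hL a) (ρ b x) + disp (hL b) x) ∂μ + ∫ _x, (n : ℝ) ∂μ := by
          apply integral_add _ (integrable_const _)
          exact Integrable.add (by
            have : Integrable (disp (hL a)) (Measure.map (ρ b) μ) := by rw [hinv b]; exact hint a
            exact this.comp_aemeasurable hmeasb) (hint b)
      _ = τ a + τ b + n := by
          rw [integral_add (by
            have : Integrable (disp (hL a)) (Measure.map (ρ b) μ) := by rw [hinv b]; exact hint a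
            exact this.comp_aemeasurable hmeasb) (hint b), hcomp_int, integral_const]
          simp [hτdef]
  -- the rotation number homomorphism to the circle
  let T : G →* Multiplicative 𝕊 := MonoidHom.mk'
    (fun g => Multiplicative.ofAdd ((τ g : ℝ) : 𝕊))
    (by
      intro a b
      obtain ⟨n, hn⟩ := key a b
      apply Multiplicative.toAdd.injective
      show ((τ (a*b) : ℝ) : 𝕊) = ((τ a : ℝ) : 𝕊) + ((τ b : ℝ) : 𝕊)
      have : ((τ a : ℝ) : 𝕊) + ((τ b : ℝ) : 𝕊) = ((τ a + τ b : ℝ) : 𝕊) := by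
        push_cast
        rfl
      rw [this]
      exact coe_eq_coe_iff.mpr ⟨n, by rw [hn]; ring⟩)
  have hker : ∀ g ∈ commutator G, ∃ m : ℤ, τ g = m := by
    intro g hg
    have hTg : T g = 1 := Abelianization.commutator_subset_ker T hg
    have : ((τ g : ℝ) : 𝕊) = ((0 : ℝ) : 𝕊) := by
      have := congrArg Multiplicative.toAdd hTg
      simpa [T] using this
    obtain ⟨m, hm⟩ := coe_eq_coe_iff.mp this
    exact ⟨m, by linarith [hm]⟩
  -- each commutator fixes a.e. point
  have hfix : ∀ g : {g : G // g ∈ commutator G}, ∀ᵐ x ∂μ, ρ g.1 x = x := by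
    rintro ⟨g, hg⟩
    obtain ⟨m, hm⟩ := hker g hg
    have h' : IsOPLift (ρ g) (fun x => L g x - m) := lift_sub_int (hL g) m
    have hd : ∀ x : 𝕊, disp h' x = disp (hL g) x - m := by
      intro x
      obtain ⟨r, rfl⟩ := QuotientAddGroup.mk_surjective x
      rw [show ((QuotientAddGroup.mk r : 𝕊)) = (r : 𝕊) from rfl, disp_coe, disp_coe]
      ring
    have hz : ∫ x, disp h' x ∂μ = 0 := by
      rw [integral_congr_ae (Filter.Eventually.of_forall hd),
        integral_sub (hint g) (integrable_const _), integral_const]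
      have hτg : ∫ a, disp (hL g) a ∂μ = τ g := rfl
      simp only [measure_univ, probReal_univ, ENNReal.toReal_one, smul_eq_mul, one_mul]
      rw [hτg, hm, sub_self]
    exact ae_fixed h' μ (hinv g) hz
  have hall : ∀ᵐ x ∂μ, ∀ g : {g : G // g ∈ commutator G}, ρ g.1 x = x :=
    (MeasureTheory.ae_all_iff).mpr hfix
  have hne : (MeasureTheory.ae μ).NeBot := ae_neBot.mpr (IsProbabilityMeasure.ne_zero μ)
  obtain ⟨x, hx⟩ := hall.exists
  exact ⟨x, fun g hg => hx ⟨g, hg⟩⟩
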